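/- For every composition s = (s(1),…,s(a)) with s(i) ≥ 2 for all i, the set of s-trees is in bijection with the set of 312-avoiding Stirling (s−𝟏)-permutations; in particular these two sets have the same cardinality. -/

import Mathlib

/-- A planar rooted tree: a root together with a (possibly empty) ordered list of subtrees. -/
inductive PTree : Type where
  | node : List PTree → PTree

namespace PTree

/-- The signature of a planar rooted tree: the numbers of children of its internal
nodes, listed in preorder. -/
def signature : PTree → List ℕ
  | node [] => []
  | node (t :: ts) =>
    (t :: ts).length :: ((t :: ts).attach.map (fun x => signature x.1)).flatten
decreasing_by
  have := List.sizeOf_lt_of_mem x.2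
  simp at this ⊢
  omega

/-- The preorder word of a planar rooted tree: `true` (= N) for each internal node and
`false` (= E) for each leaf, nodes listed in preorder. -/
def word : PTree → List Bool
  | node ts => (!ts.isEmpty) :: (ts.attach.map (fun x => word x.1)).flatten
decreasing_by
  have := List.sizeOf_lt_of_mem x.2
  simp at this ⊢
  omega

end PTree

/-- `w` is an `s`-permutation: a word on the alphabet `{1,…,ℓ(s)}` with exactly `s(i)`
occurrences of each letter `i`. -/
def IsSPerm (s w : List ℕ) : Prop :=
  (∀ x ∈ w, 1 ≤ x ∧ x ≤ s.length) ∧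
    ∀ i : Fin s.length, w.count ((i : ℕ) + 1) = s.get i

/-- `w` avoids the pattern 212: there are no positions `p < q < r` with
`w_p = w_r` and `w_q < w_p`. -/
def Avoids212 (w : List ℕ) : Prop :=
  ¬ ∃ p q r : Fin w.length, p < q ∧ q < r ∧ w.get p = w.get r ∧ w.get q < w.get p

/-- `w` avoids the pattern 312: there are no positions `p < q < r` with
`w_q < w_r < w_p`. -/
def Avoids312 (w : List ℕ) : Prop :=
  ¬ ∃ p q r : Fin w.length, p < q ∧ q < r ∧ w.get q < w.get r ∧ w.get r < w.get p

namespace SP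

local infixl:50 " <+ " => List.Sublist


lemma signature_node (ts : List PTree) :
    PTree.signature (.node ts) =
      if ts.isEmpty then [] else ts.length :: (ts.map PTree.signature).flatten := by
  cases ts with
  | nil => rw [PTree.signature]; rfl
  | cons t ts =>
    rw [PTree.signature]
    simp [List.attach_map_val]

def mySplit (m : ℕ) : List ℕ → List (List ℕ)
  | [] => [[]]
  | x :: xs =>
    if x = m then [] :: mySplit m xs
    else match mySplit m xs with
      | [] => [[x]]
      | u :: us => (x :: u) :: us

lemma mySplit_ne_nil (m : ℕ) (w : List ℕ) : mySplit m w ≠ [] := by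
  induction w with
  | nil => simp [mySplit]
  | cons x xs ih =>
    simp only [mySplit]
    split
    · simp
    · split <;> simp

lemma mySplit_of_not_mem {m : ℕ} {w : List ℕ} (h : m ∉ w) : mySplit m w = [w] := by
  induction w with
  | nil => rfl
  | cons x xs ih =>
    simp only [List.mem_cons, not_or] at h
    rw [mySplit, if_neg (Ne.symm h.1), ih h.2]

lemma mySplit_append {m : ℕ} {u w : List ℕ} (h : m ∉ u) :
    mySplit m (u ++ m :: w) = u :: mySplit m w := by
  induction u with
  | nil => simp [mySplit]
  | cons x xs ih =>
    simp only [List.mem_cons, not_or] at h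
    rw [List.cons_append, mySplit, if_neg (Ne.symm h.1), ih h.2]

lemma length_le_of_mem_mySplit {m : ℕ} {w l : List ℕ} (h : l ∈ mySplit m w) :
    l.length ≤ w.length := by
  induction w generalizing l with
  | nil => simp [mySplit] at h; simp [h]
  | cons x xs ih =>
    simp only [mySplit] at h
    split at h
    · rcases List.mem_cons.1 h with rfl | h
      · simp
      · exact (ih h).trans (by simp)
    · rename_i hx
      rcases hr : mySplit m xs with _ | ⟨u, us⟩
      · exact absurd hr (mySplit_ne_nil m xs)
      · rw [hr] at h
        rcases List.mem_cons.1 h with rfl | h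
        · have : u ∈ mySplit m xs := by rw [hr]; exact List.mem_cons_self
          simpa using ih this
        · have : l ∈ mySplit m xs := by rw [hr]; exact List.mem_cons_of_mem _ h
          exact (ih this).trans (by simp)

lemma length_lt_of_mem_mySplit {m : ℕ} {w l : List ℕ} (h : l ∈ mySplit m w)
    (hm : m ∈ w) : l.length < w.length := by
  induction w generalizing l with
  | nil => simp at hm
  | cons x xs ih =>
    simp only [mySplit] at h
    split at h
    · rcases List.mem_cons.1 h with rfl | h
      · simp
      · exact Nat.lt_succ_of_le (length_le_of_mem_mySplit h)
    · rename_i hx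
      have hm' : m ∈ xs := by rcases List.mem_cons.1 hm with rfl | h'; exact absurd rfl hx; exact h'
      rcases hr : mySplit m xs with _ | ⟨u, us⟩
      · exact absurd hr (mySplit_ne_nil m xs)
      · rw [hr] at h
        rcases List.mem_cons.1 h with rfl | h
        · have : u ∈ mySplit m xs := by rw [hr]; exact List.mem_cons_self
          simpa using ih this hm'
        · have : l ∈ mySplit m xs := by rw [hr]; exact List.mem_cons_of_mem _ h
          exact (ih this hm').trans (by simp)

def dec (w : List ℕ) : PTree :=
  match hw : w.min? with
  | none => .node []
  | some m => .node ((mySplit m w).attach.map fun u => dec u.1)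
termination_by w.length
decreasing_by
  exact length_lt_of_mem_mySplit u.2 (List.min?_mem hw)

mutual
def enc : ℕ → PTree → List ℕ
  | _, .node [] => []
  | o, .node (t :: ts) => enc (o+1) t ++ encs (o + 1 + (PTree.signature t).length) o ts
termination_by o t => sizeOf t
def encs : ℕ → ℕ → List PTree → List ℕ
  | _, _, [] => []
  | o, sep, t :: ts => sep :: (enc o t ++ encs (o + (PTree.signature t).length) sep ts)
termination_by o sep ts => sizeOf ts
end

def rep (o : ℕ) : List ℕ → List ℕ
  | [] => []
  | k :: c => List.replicate k o ++ rep (o+1) c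


lemma dec_nil : dec [] = .node [] := by rw [dec]; rfl

lemma dec_eq {w : List ℕ} {m : ℕ} (hw : w.min? = some m) :
    dec w = .node ((mySplit m w).map dec) := by
  rw [dec]
  split
  · rename_i h; rw [h] at hw; exact absurd hw (by simp)
  · rename_i m' h
    rw [h] at hw
    obtain rfl : m' = m := by injection hw
    congr 1
    simp

lemma enc_nil (o : ℕ) : enc o (.node []) = [] := by rw [enc]

lemma enc_cons (o : ℕ) (t : PTree) (ts : List PTree) :
    enc o (.node (t :: ts)) =
      enc (o+1) t ++ encs (o + 1 + (PTree.signature t).length) o ts := by rw [enc]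

lemma encs_nil (o sep : ℕ) : encs o sep [] = [] := by rw [encs]

lemma encs_cons (o sep : ℕ) (t : PTree) (ts : List PTree) :
    encs o sep (t :: ts) =
      sep :: (enc o t ++ encs (o + (PTree.signature t).length) sep ts) := by rw [encs]

lemma rep_append (c₁ : List ℕ) (o : ℕ) (c₂ : List ℕ) :
    rep o (c₁ ++ c₂) = rep o c₁ ++ rep (o + c₁.length) c₂ := by
  induction c₁ generalizing o with
  | nil => simp [rep]
  | cons k c ih =>
    have hoff : o + 1 + c.length = o + (k :: c).length := by simp; omega
    rw [List.cons_append, rep, rep, ih (o+1), List.append_assoc, hoff]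

lemma mem_rep {x o : ℕ} {c : List ℕ} (h : x ∈ rep o c) : o ≤ x ∧ x < o + c.length := by
  induction c generalizing o with
  | nil => simp [rep] at h
  | cons k c ih =>
    simp only [rep, List.mem_append, List.mem_replicate] at h
    rcases h with h | h
    · simp only [List.length_cons]; omega
    · have := ih h; simp only [List.length_cons]; omega

lemma count_rep (c : List ℕ) (o i : ℕ) : (rep o c).count (o + i) = c.getD i 0 := by
  induction c generalizing o i with
  | nil => simp [rep]
  | cons k c ih =>
    rw [rep, List.count_append, List.count_replicate]
    cases i with
    | zero =>
      have h0 : (rep (o+1) c).count o = 0 := by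
        rw [List.count_eq_zero]
        intro hmem; have := mem_rep hmem; omega
      simp [h0]
    | succ j =>
      have : o + (j+1) = (o+1) + j := by omega
      rw [this, ih (o+1) j]
      simp
      omega

lemma count_rep_of_lt {x o : ℕ} (c : List ℕ) (h : x < o) : (rep o c).count x = 0 := by
  rw [List.count_eq_zero]; intro hmem; have := mem_rep hmem; omega

def Pat212 (w : List ℕ) : Prop := ∃ a b, b < a ∧ [a, b, a] <+ w

def Pat312 (w : List ℕ) : Prop := ∃ a b c, b < c ∧ c < a ∧ [a, b, c] <+ w

lemma sublist3_iff {w : List ℕ} {x y z : ℕ} :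
    [x, y, z] <+ w ↔ ∃ p q r : Fin w.length,
      p < q ∧ q < r ∧ w.get p = x ∧ w.get q = y ∧ w.get r = z := by
  rw [List.sublist_iff_exists_fin_orderEmbedding_get_eq]
  constructor
  · rintro ⟨f, hf⟩
    refine ⟨f ⟨0, by simp⟩, f ⟨1, by simp⟩, f ⟨2, by simp⟩, ?_, ?_, ?_, ?_, ?_⟩
    · exact f.strictMono (Fin.mk_lt_mk.mpr (by norm_num))
    · exact f.strictMono (Fin.mk_lt_mk.mpr (by norm_num))
    · exact (hf ⟨0, by simp⟩).symm
    · exact (hf ⟨1, by simp⟩).symm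
    · exact (hf ⟨2, by simp⟩).symm
  · rintro ⟨p, q, r, hpq, hqr, hp, hq, hr⟩
    refine ⟨OrderEmbedding.ofStrictMono
      (fun i : Fin 3 => if i.1 = 0 then p else if i.1 = 1 then q else r) ?_, ?_⟩
    · intro a b hab
      fin_cases a <;> fin_cases b <;> simp_all <;> omega
    · intro ix
      fin_cases ix <;> simp_all

lemma avoids212_iff (w : List ℕ) : Avoids212 w ↔ ¬ Pat212 w := by
  unfold Avoids212 Pat212
  constructor
  · rintro h ⟨a, b, hba, hsub⟩
    obtain ⟨p, q, r, hpq, hqr, hp, hq, hr⟩ := sublist3_iff.1 hsub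
    exact h ⟨p, q, r, hpq, hqr, by omega, by omega⟩
  · rintro h ⟨p, q, r, hpq, hqr, heq, hlt⟩
    exact h ⟨w.get p, w.get q, hlt, sublist3_iff.2 ⟨p, q, r, hpq, hqr, rfl, rfl, heq.symm⟩⟩

lemma avoids312_iff (w : List ℕ) : Avoids312 w ↔ ¬ Pat312 w := by
  unfold Avoids312 Pat312
  constructor
  · rintro h ⟨a, b, c, hbc, hca, hsub⟩
    obtain ⟨p, q, r, hpq, hqr, hp, hq, hr⟩ := sublist3_iff.1 hsub
    exact h ⟨p, q, r, hpq, hqr, by omega, by omega⟩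
  · rintro h ⟨p, q, r, hpq, hqr, h1, h2⟩
    exact h ⟨w.get p, w.get q, w.get r, h1, h2, sublist3_iff.2 ⟨p, q, r, hpq, hqr, rfl, rfl, rfl⟩⟩

lemma not_pat212_sublist {u w : List ℕ} (h : ¬ Pat212 w) (hs : u <+ w) : ¬ Pat212 u := by
  rintro ⟨a, b, hba, hsub⟩; exact h ⟨a, b, hba, hsub.trans hs⟩

lemma not_pat312_sublist {u w : List ℕ} (h : ¬ Pat312 w) (hs : u <+ w) : ¬ Pat312 u := by
  rintro ⟨a, b, c, h1, h2, hsub⟩; exact h ⟨a, b, c, h1, h2, hsub.trans hs⟩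

lemma not_pat212_nil : ¬ Pat212 [] := by
  rintro ⟨a, b, _, h⟩; simp at h

lemma not_pat312_nil : ¬ Pat312 [] := by
  rintro ⟨a, b, c, _, _, h⟩; simp at h

lemma pat_append {u v : List ℕ} {sep : ℕ}
    (hu2 : ¬ Pat212 u) (hu3 : ¬ Pat312 u) (hv2 : ¬ Pat212 v) (hv3 : ¬ Pat312 v)
    (hu : ∀ x ∈ u, sep < x) (hvlo : ∀ y ∈ v, sep ≤ y)
    (hv : ∀ y ∈ v, y = sep ∨ ∀ x ∈ u, x < y) :
    ¬ Pat212 (u ++ v) ∧ ¬ Pat312 (u ++ v) := by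
  constructor
  · rintro ⟨a, b, hba, hsub⟩
    rw [List.sublist_append_iff] at hsub
    obtain ⟨p1, p2, hsplit, h1, h2⟩ := hsub
    rcases p1 with _ | ⟨x1, _ | ⟨x2, _ | ⟨x3, p⟩⟩⟩
    · simp at hsplit; subst hsplit
      exact hv2 ⟨a, b, hba, h2⟩
    · simp at hsplit
      obtain ⟨rfl, rfl⟩ := hsplit
      have ha : a ∈ u := h1.subset (by simp)
      have ha' : a ∈ v := h2.subset (by simp)
      rcases hv a ha' with rfl | hlt
      · exact absurd (hu a ha) (lt_irrefl _)
      · exact absurd (hlt a ha) (lt_irrefl _)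
    · simp at hsplit
      obtain ⟨rfl, rfl, rfl⟩ := hsplit
      have ha : a ∈ u := h1.subset (by simp)
      have ha' : a ∈ v := h2.subset (by simp)
      rcases hv a ha' with rfl | hlt
      · exact absurd (hu a ha) (lt_irrefl _)
      · exact absurd (hlt a ha) (lt_irrefl _)
    · simp at hsplit
      obtain ⟨rfl, rfl, rfl, hp⟩ := hsplit
      obtain ⟨rfl, rfl⟩ := hp
      exact hu2 ⟨a, b, hba, h1⟩
  · rintro ⟨a, b, c, hbc, hca, hsub⟩
    rw [List.sublist_append_iff] at hsub
    obtain ⟨p1, p2, hsplit, h1, h2⟩ := hsub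
    rcases p1 with _ | ⟨x1, _ | ⟨x2, _ | ⟨x3, p⟩⟩⟩
    · simp at hsplit; subst hsplit
      exact hv3 ⟨a, b, c, hbc, hca, h2⟩
    · simp at hsplit
      obtain ⟨rfl, rfl⟩ := hsplit
      have ha : a ∈ u := h1.subset (by simp)
      have hb : b ∈ v := h2.subset (by simp)
      have hc : c ∈ v := h2.subset (by simp)
      rcases hv c hc with rfl | hlt
      · have := hvlo b hb; omega
      · have := hlt a ha; omega
    · simp at hsplit
      obtain ⟨rfl, rfl, rfl⟩ := hsplit
      have ha : a ∈ u := h1.subset (by simp)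
      have hb : b ∈ u := h1.subset (by simp)
      have hc : c ∈ v := h2.subset (by simp)
      rcases hv c hc with rfl | hlt
      · have := hu b hb; omega
      · have := hlt a ha; omega
    · simp at hsplit
      obtain ⟨rfl, rfl, rfl, hp⟩ := hsplit
      obtain ⟨rfl, rfl⟩ := hp
      exact hu3 ⟨a, b, c, hbc, hca, h1⟩

lemma pat_cons {w : List ℕ} {sep : ℕ}
    (hw2 : ¬ Pat212 w) (hw3 : ¬ Pat312 w) (hlo : ∀ x ∈ w, sep ≤ x) :
    ¬ Pat212 (sep :: w) ∧ ¬ Pat312 (sep :: w) := by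
  constructor
  · rintro ⟨a, b, hba, hsub⟩
    rcases List.sublist_cons_iff.1 hsub with h | ⟨l', heq, h⟩
    · exact hw2 ⟨a, b, hba, h⟩
    · obtain ⟨rfl, rfl⟩ : a = sep ∧ l' = [b, a] := by
        constructor <;> [skip; skip] <;> injection heq with h1 h2 <;> simp_all
      have := hlo b (h.subset (by simp)); omega
  · rintro ⟨a, b, c, hbc, hca, hsub⟩
    rcases List.sublist_cons_iff.1 hsub with h | ⟨l', heq, h⟩
    · exact hw3 ⟨a, b, c, hbc, hca, h⟩
    · obtain ⟨rfl, rfl⟩ : a = sep ∧ l' = [b, c] := by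
        constructor <;> [skip; skip] <;> injection heq with h1 h2 <;> simp_all
      have := hlo c (h.subset (by simp)); omega

lemma perm_swap3 (a b c : List ℕ) : (a ++ (b ++ c)).Perm (b ++ (a ++ c)) := by
  rw [← List.append_assoc, ← List.append_assoc]
  exact (List.perm_append_comm).append_right c

mutual
theorem enc_good (T : PTree) (o : ℕ) :
    (enc o T).Perm (rep o ((PTree.signature T).map (fun x => x - 1))) ∧
      ¬ Pat212 (enc o T) ∧ ¬ Pat312 (enc o T) := by
  match T with
  | .node [] =>
    rw [enc_nil, signature_node]
    exact ⟨by simp [rep], not_pat212_nil, not_pat312_nil⟩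
  | .node (t :: ts) =>
    have iht := enc_good t (o+1)
    have ihts := encs_good ts (o + 1 + (PTree.signature t).length) o (by omega)
    rw [enc_cons, signature_node]
    simp only [List.isEmpty_cons, List.map_cons, List.flatten_cons, List.map_append,
      List.length_cons, if_false, Bool.false_eq_true, Nat.add_sub_cancel]
    have hmemu : ∀ x ∈ enc (o+1) t, o + 1 ≤ x ∧ x < o + 1 + (PTree.signature t).length := by
      intro x hx
      have := mem_rep (iht.1.mem_iff.1 hx)
      simpa using this
    have hmemv : ∀ y ∈ encs (o + 1 + (PTree.signature t).length) o ts,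
        y = o ∨ o + 1 + (PTree.signature t).length ≤ y := by
      intro y hy
      have := ihts.1.mem_iff.1 hy
      rw [List.mem_append] at this
      rcases this with h | h
      · exact Or.inl (List.eq_of_mem_replicate h)
      · exact Or.inr (mem_rep h).1
    refine ⟨?_, ?_⟩
    · rw [rep, rep_append, List.length_map]
      exact (iht.1.append ihts.1).trans (perm_swap3 _ _ _)
    · exact pat_append (sep := o) iht.2.1 iht.2.2 ihts.2.1 ihts.2.2
        (fun x hx => by have := hmemu x hx; omega)
        (fun y hy => by rcases hmemv y hy with rfl | h; omega; omega)
        (fun y hy => by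
          rcases hmemv y hy with rfl | h
          · exact Or.inl rfl
          · exact Or.inr (fun x hx => by have := hmemu x hx; omega))
termination_by sizeOf T

theorem encs_good (ts : List PTree) (o sep : ℕ) (hsep : sep < o) :
    (encs o sep ts).Perm (List.replicate ts.length sep ++
        rep o (((ts.map PTree.signature).flatten).map (fun x => x - 1))) ∧
      ¬ Pat212 (encs o sep ts) ∧ ¬ Pat312 (encs o sep ts) := by
  match ts with
  | [] =>
    rw [encs_nil]
    exact ⟨by simp [rep], not_pat212_nil, not_pat312_nil⟩
  | t :: ts =>
    have iht := enc_good t o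
    have ihts := encs_good ts (o + (PTree.signature t).length) sep (by omega)
    rw [encs_cons]
    simp only [List.map_cons, List.flatten_cons, List.map_append, List.length_cons,
      List.replicate_succ, List.cons_append]
    have hmemu : ∀ x ∈ enc o t, o ≤ x ∧ x < o + (PTree.signature t).length := by
      intro x hx
      have := mem_rep (iht.1.mem_iff.1 hx)
      simpa using this
    have hmemv : ∀ y ∈ encs (o + (PTree.signature t).length) sep ts,
        y = sep ∨ o + (PTree.signature t).length ≤ y := by
      intro y hy
      have := ihts.1.mem_iff.1 hy
      rw [List.mem_append] at this
      rcases this with h | h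
      · exact Or.inl (List.eq_of_mem_replicate h)
      · exact Or.inr (mem_rep h).1
    have hpats : ¬ Pat212 (enc o t ++ encs (o + (PTree.signature t).length) sep ts) ∧
        ¬ Pat312 (enc o t ++ encs (o + (PTree.signature t).length) sep ts) :=
      pat_append (sep := sep) iht.2.1 iht.2.2 ihts.2.1 ihts.2.2
        (fun x hx => by have := hmemu x hx; omega)
        (fun y hy => by rcases hmemv y hy with rfl | h; omega; omega)
        (fun y hy => by
          rcases hmemv y hy with rfl | h
          · exact Or.inl rfl
          · exact Or.inr (fun x hx => by have := hmemu x hx; omega))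
    refine ⟨?_, ?_⟩
    · rw [rep_append, List.length_map]
      exact ((iht.1.append ihts.1).trans (perm_swap3 _ _ _)).cons sep
    · exact pat_cons hpats.1 hpats.2 (fun x hx => by
        rw [List.mem_append] at hx
        rcases hx with h | h
        · have := hmemu x h; omega
        · rcases hmemv x h with rfl | h'; omega; omega)
termination_by sizeOf ts
end

lemma mem_enc {o x : ℕ} {T : PTree} (h : x ∈ enc o T) :
    o ≤ x ∧ x < o + (PTree.signature T).length := by
  have := mem_rep ((enc_good T o).1.mem_iff.1 h)
  simpa using this

lemma min?_eq_some_of {w : List ℕ} {o : ℕ} (hmem : o ∈ w) (hle : ∀ x ∈ w, o ≤ x) :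
    w.min? = some o := by
  rw [List.min?_eq_some_iff]
  exact ⟨hmem, hle⟩

def encBlocks : ℕ → List PTree → List (List ℕ)
  | _, [] => []
  | o, t :: ts => enc o t :: encBlocks (o + (PTree.signature t).length) ts

lemma mySplit_encs (ts : List PTree) (o sep : ℕ) (hsep : sep < o) (u : List ℕ)
    (hu : sep ∉ u) : mySplit sep (u ++ encs o sep ts) = u :: encBlocks o ts := by
  induction ts generalizing o u with
  | nil => rw [encs_nil, encBlocks, List.append_nil, mySplit_of_not_mem hu]
  | cons t ts ih =>
    rw [encs_cons, encBlocks, mySplit_append hu]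
    have : sep ∉ enc o t := fun h => by have := mem_enc h; omega
    rw [ih (o + (PTree.signature t).length) (by omega) (enc o t) this]

mutual
theorem dec_enc (T : PTree) (o : ℕ) (hT : ∀ x ∈ PTree.signature T, 2 ≤ x) :
    dec (enc o T) = T := by
  match T with
  | .node [] => rw [enc_nil, dec_nil]
  | .node (t :: ts) =>
    have hsig : PTree.signature (.node (t :: ts)) =
        (ts.length + 1) :: (PTree.signature t ++ (ts.map PTree.signature).flatten) := by
      rw [signature_node]; simp
    match ts with
    | [] =>
      exfalso
      have := hT (0 + 1) (by rw [hsig]; simp)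
      omega
    | t2 :: ts =>
      rw [enc_cons]
      have hhd : ∀ x ∈ PTree.signature t, 2 ≤ x := by
        intro x hx
        exact hT x (by rw [hsig]; simp [hx])
      have htl : ∀ t' ∈ t2 :: ts, ∀ x ∈ PTree.signature t', 2 ≤ x := by
        intro t' ht' x hx
        apply hT x
        rw [hsig]
        simp only [List.mem_cons]
        right
        exact List.mem_append.2 (Or.inr (List.mem_flatten.2 ⟨_, List.mem_map_of_mem ht', hx⟩))
      have homem : o ∈ enc (o+1) t ++ encs (o + 1 + (PTree.signature t).length) o (t2 :: ts) := by
        rw [encs_cons]; simp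
      have holb : ∀ x ∈ enc (o+1) t ++ encs (o + 1 + (PTree.signature t).length) o (t2 :: ts),
          o ≤ x := by
        rw [← enc_cons]
        intro x hx
        exact (mem_enc hx).1
      rw [dec_eq (min?_eq_some_of homem holb)]
      rw [mySplit_encs _ _ _ (by omega) _ (fun h => by have := mem_enc h; omega)]
      rw [List.map_cons, dec_enc t (o+1) hhd, decs_enc (t2 :: ts) _ htl]
termination_by sizeOf T

theorem decs_enc (ts : List PTree) (o : ℕ)
    (h : ∀ t ∈ ts, ∀ x ∈ PTree.signature t, 2 ≤ x) :
    (encBlocks o ts).map dec = ts := by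
  match ts with
  | [] => rw [encBlocks]; rfl
  | t :: ts =>
    rw [encBlocks, List.map_cons, dec_enc t o (h t (by simp)),
      decs_enc ts _ (fun t' ht' => h t' (by simp [ht']))]
termination_by sizeOf ts
end

lemma sub3_mid {u w' : List ℕ} {x o y : ℕ} (hx : x ∈ u) (hy : y ∈ w') :
    [x, o, y] <+ u ++ o :: w' :=
  List.Sublist.append (List.singleton_sublist.2 hx) ((List.singleton_sublist.2 hy).cons₂ o)

def Chain : ℕ → List (List ℕ × List ℕ) → Prop
  | _, [] => True
  | o, p :: L => p.1.Perm (rep o p.2) ∧ ¬ Pat212 p.1 ∧ ¬ Pat312 p.1 ∧ (∀ x ∈ p.2, 1 ≤ x) ∧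
      Chain (o + p.2.length) L

lemma first_occ {o : ℕ} {w : List ℕ} (h : o ∈ w) :
    ∃ u w', w = u ++ o :: w' ∧ o ∉ u := by
  induction w with
  | nil => simp at h
  | cons x xs ih =>
    by_cases hx : x = o
    · exact ⟨[], xs, by simp [hx], by simp⟩
    · have : o ∈ xs := by rcases List.mem_cons.1 h with h' | h'; exact absurd h'.symm hx; exact h'
      obtain ⟨u, w', rfl, hu⟩ := ih this
      exact ⟨x :: u, w', rfl, by simp [hu, Ne.symm hx]⟩

theorem blocks (k : ℕ) : ∀ (w : List ℕ) (o o₁ : ℕ) (c' : List ℕ), o < o₁ →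
    w.Perm (List.replicate k o ++ rep o₁ c') → (∀ x ∈ c', 1 ≤ x) →
    ¬ Pat212 w → ¬ Pat312 w →
    ∃ L : List (List ℕ × List ℕ), mySplit o w = L.map Prod.fst ∧ L.length = k + 1 ∧
      (L.map Prod.snd).flatten = c' ∧ Chain o₁ L := by
  induction k with
  | zero =>
    intro w o o₁ c' ho hperm hc h2 h3
    rw [List.replicate_zero, List.nil_append] at hperm
    have hno : o ∉ w := by
      intro h
      have := hperm.count_eq o
      rw [count_rep_of_lt _ ho] at this
      exact absurd (List.count_pos_iff.2 h) (by omega)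
    exact ⟨[(w, c')], by simp [mySplit_of_not_mem hno], by simp, by simp,
      hperm, h2, h3, hc, trivial⟩
  | succ k ih =>
    intro w o o₁ c' ho hperm hc h2 h3
    have homem : o ∈ w := by
      have := hperm.count_eq o
      rw [List.count_append, List.count_replicate, count_rep_of_lt _ ho] at this
      simp only [beq_self_eq_true, if_true] at this
      exact List.count_pos_iff.1 (by omega)
    obtain ⟨u, w', rfl, hnou⟩ := first_occ homem
    have hu2 : ¬ Pat212 u := not_pat212_sublist h2 (List.sublist_append_left u _)
    have hu3 : ¬ Pat312 u := not_pat312_sublist h3 (List.sublist_append_left u _)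
    have hw'sub : w' <+ u ++ o :: w' :=
      (List.sublist_cons_self o w').trans (List.sublist_append_right u _)
    have hw'2 : ¬ Pat212 w' := not_pat212_sublist h2 hw'sub
    have hw'3 : ¬ Pat312 w' := not_pat312_sublist h3 hw'sub
    have hcnt : ∀ x, (u ++ o :: w').count x =
        (if o = x then k + 1 else 0) + (rep o₁ c').count x := by
      intro x
      rw [hperm.count_eq x, List.count_append, List.count_replicate]
      simp only [beq_iff_eq]
    have hurange : ∀ x ∈ u, o₁ ≤ x ∧ x < o₁ + c'.length := by
      intro x hx
      have hxw : x ∈ List.replicate (k+1) o ++ rep o₁ c' :=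
        hperm.subset (List.mem_append.2 (Or.inl hx))
      rcases List.mem_append.1 hxw with h | h
      · exact absurd (List.eq_of_mem_replicate h) (fun he => hnou (he ▸ hx))
      · exact mem_rep h
    have hmemc : ∀ i, i < c'.length → (o₁ + i) ∈ u ++ o :: w' := by
      intro i hi
      have h1 : c'.getD i 0 = c'[i] := by
        rw [List.getD_eq_getElem?_getD, List.getElem?_eq_getElem hi]; rfl
      have hpos : 1 ≤ c'.getD i 0 := by rw [h1]; exact hc _ (List.getElem_mem hi)
      have := hcnt (o₁ + i)
      rw [count_rep _ o₁ i, if_neg (show ¬ o = o₁ + i by omega)] at this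
      exact List.count_pos_iff.1 (by omega)
    have hPtop : (o₁ + c'.length) ∉ u := fun h => by have := hurange _ h; omega
    have hPex : ∃ i, (o₁ + i) ∉ u := ⟨c'.length, hPtop⟩
    set m := Nat.find hPex with hm_def
    have hm_le : m ≤ c'.length := Nat.find_min' _ hPtop
    have hmem_u : ∀ i, i < m → (o₁ + i) ∈ u := fun i hi => not_not.1 (Nat.find_min hPex hi)
    have hnot_w' : ∀ i, i < m → (o₁ + i) ∉ w' := by
      intro i hi hw'
      exact h2 ⟨o₁ + i, o, by omega, sub3_mid (hmem_u i hi) hw'⟩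
    have hnot_u : ∀ i, m ≤ i → (o₁ + i) ∉ u := by
      intro i hmi hiu
      have him : i < c'.length := by have := hurange _ hiu; omega
      have hmc : m < c'.length := lt_of_le_of_lt hmi him
      have hmm : (o₁ + m) ∈ u := by
        rcases List.mem_append.1 (hmemc m hmc) with h | h
        · exact h
        · rcases List.mem_cons.1 h with h' | h'
          · omega
          · rcases Nat.eq_or_lt_of_le hmi with rfl | hlt
            · exact absurd h' (fun h'' => (Nat.find_spec hPex) hiu)
            · exact absurd (h3 ⟨o₁ + i, o, o₁ + m, by omega, by omega, sub3_mid hiu h'⟩) not_false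
      exact (Nat.find_spec hPex) hmm
    have hmem_w' : ∀ i, m ≤ i → i < c'.length → (o₁ + i) ∈ w' := by
      intro i h1 h2'
      rcases List.mem_append.1 (hmemc i h2') with h | h
      · exact absurd h (hnot_u i h1)
      · rcases List.mem_cons.1 h with h' | h'
        · omega
        · exact h'
    have hdlen : (c'.take m).length = m := by rw [List.length_take]; omega
    have hrepsplit : rep o₁ c' = rep o₁ (c'.take m) ++ rep (o₁ + m) (c'.drop m) := by
      conv_lhs => rw [← List.take_append_drop m c']
      rw [rep_append, hdlen]
    have hcu : ∀ x, u.count x = (rep o₁ (c'.take m)).count x := by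
      intro x
      by_cases hxu : x ∈ u
      · have hr := hurange x hxu
        have hx_eq : x = o₁ + (x - o₁) := by omega
        have him : x - o₁ < m := by
          by_contra h'
          exact hnot_u (x - o₁) (le_of_not_gt h') (hx_eq ▸ hxu)
        have hcw0 : (o :: w').count x = 0 := by
          rw [List.count_eq_zero]
          intro hmem
          rcases List.mem_cons.1 hmem with h' | h'
          · omega
          · exact hnot_w' (x - o₁) him (hx_eq ▸ h')
        have htot := hcnt x
        rw [List.count_append, hcw0, if_neg (show ¬ o = x by omega)] at htot
        have hrx : (rep o₁ c').count x =
            (rep o₁ (c'.take m)).count x + (rep (o₁ + m) (c'.drop m)).count x := by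
          rw [hrepsplit, List.count_append]
        have hdrop0 : (rep (o₁ + m) (c'.drop m)).count x = 0 := count_rep_of_lt _ (by omega)
        omega
      · rw [List.count_eq_zero.2 hxu, eq_comm, List.count_eq_zero]
        intro hmem
        have := mem_rep hmem
        rw [hdlen] at this
        exact hxu (by
          have : x = o₁ + (x - o₁) := by omega
          exact this ▸ hmem_u (x - o₁) (by omega))
    have hpu : u.Perm (rep o₁ (c'.take m)) := List.perm_iff_count.2 hcu
    have hcw' : ∀ x, w'.count x =
        (List.replicate k o ++ rep (o₁ + m) (c'.drop m)).count x := by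
      intro x
      have htot := hcnt x
      rw [List.count_append, List.count_cons, hrepsplit, List.count_append] at htot
      rw [List.count_append, List.count_replicate]
      simp only [beq_iff_eq] at htot ⊢
      have := hcu x
      by_cases hxo : x = o
      · have hxo' : o = x := hxo.symm
        simp only [if_pos hxo, if_pos hxo'] at htot ⊢
        have h0 : (rep (o₁ + m) (c'.drop m)).count x = 0 := count_rep_of_lt _ (by omega)
        omega
      · have hxo' : ¬ o = x := fun h => hxo h.symm
        simp only [if_neg hxo, if_neg hxo'] at htot ⊢
        omega
    have hpw' : w'.Perm (List.replicate k o ++ rep (o₁ + m) (c'.drop m)) :=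
      List.perm_iff_count.2 hcw'
    obtain ⟨L', hsplit', hlen', hflat', hchain'⟩ := ih w' o (o₁ + m) (c'.drop m) (by omega)
      hpw' (fun x hx => hc x (List.drop_subset _ _ hx)) hw'2 hw'3
    refine ⟨(u, c'.take m) :: L', ?_, by simp [hlen'], ?_, ?_⟩
    · rw [mySplit_append hnou, hsplit', List.map_cons]
    · rw [List.map_cons, List.flatten_cons, hflat', List.take_append_drop]
    · exact ⟨hpu, hu2, hu3, fun x hx => hc x (List.take_subset _ _ hx),
        by rw [hdlen]; exact hchain'⟩

def preJoin (m : ℕ) (us : List (List ℕ)) : List ℕ := (us.map (fun u => m :: u)).flatten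

def joinSep (m : ℕ) : List (List ℕ) → List ℕ
  | [] => []
  | u :: us => u ++ preJoin m us

lemma joinSep_mySplit (m : ℕ) (w : List ℕ) : joinSep m (mySplit m w) = w := by
  induction w with
  | nil => rfl
  | cons x xs ih =>
    rw [mySplit]
    split
    · rename_i hx
      subst hx
      rcases hr : mySplit x xs with _ | ⟨u, us⟩
      · exact absurd hr (mySplit_ne_nil x xs)
      · rw [hr] at ih
        rw [joinSep] at ih ⊢
        simp only [preJoin, List.map_cons, List.flatten_cons] at ih ⊢
        simp at ih ⊢
        exact ih
    · rename_i hx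
      rcases hr : mySplit m xs with _ | ⟨u, us⟩
      · exact absurd hr (mySplit_ne_nil m xs)
      · rw [hr] at ih
        rw [joinSep] at ih ⊢
        simp only [List.cons_append, List.cons.injEq, true_and]
        exact ih

theorem dec_good (n : ℕ) : ∀ (w : List ℕ), w.length ≤ n → ∀ (o : ℕ) (c : List ℕ),
    (∀ x ∈ c, 1 ≤ x) → w.Perm (rep o c) → ¬ Pat212 w → ¬ Pat312 w →
    PTree.signature (dec w) = c.map (fun x => x + 1) ∧ enc o (dec w) = w := by
  induction n using Nat.strong_induction_on with
  | _ n IH =>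
  intro w hwn o c hc hperm h2 h3
  match c with
  | [] =>
    have hw : w = [] := by
      have : rep o [] = [] := rfl
      rw [this] at hperm
      exact hperm.eq_nil
    subst hw
    rw [dec_nil]
    exact ⟨by rw [signature_node]; rfl, by rw [enc_nil]⟩
  | k :: c' =>
    have hk : 1 ≤ k := hc k (by simp)
    have hc' : ∀ x ∈ c', 1 ≤ x := fun x hx => hc x (by simp [hx])
    rw [rep] at hperm
    have homem : o ∈ w := by
      have := hperm.count_eq o
      rw [List.count_append, List.count_replicate, count_rep_of_lt _ (by omega)] at this
      simp only [beq_self_eq_true, if_true] at this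
      exact List.count_pos_iff.1 (by omega)
    have hall : ∀ x ∈ w, o ≤ x := by
      intro x hx
      rcases List.mem_append.1 (hperm.subset hx) with h | h
      · exact le_of_eq (List.eq_of_mem_replicate h).symm
      · have := mem_rep h; omega
    have hmin : w.min? = some o := min?_eq_some_of homem hall
    obtain ⟨L, hsplit, hlen, hflat, hchain⟩ :=
      blocks k w o (o+1) c' (by omega) hperm hc' h2 h3
    have hblen : ∀ p ∈ L, p.1.length < w.length := by
      intro p hp
      apply length_lt_of_mem_mySplit _ homem
      rw [hsplit]
      exact List.mem_map_of_mem (f := Prod.fst) hp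
    have aux : ∀ (M : List (List ℕ × List ℕ)) (o₁ : ℕ), Chain o₁ M →
        (∀ p ∈ M, p.1.length < w.length) →
        (((M.map Prod.fst).map dec).map PTree.signature).flatten
            = ((M.map Prod.snd).flatten).map (fun x => x + 1) ∧
        ∀ sep, encs o₁ sep ((M.map Prod.fst).map dec) = preJoin sep (M.map Prod.fst) := by
      intro M
      induction M with
      | nil =>
        intro o₁ _ _
        exact ⟨rfl, fun sep => by rw [List.map_nil, List.map_nil, encs_nil]; rfl⟩
      | cons p M ihM =>
        intro o₁ hch hlens
        obtain ⟨hperm_p, hp2, hp3, hcp, hch'⟩ := hch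
        have hplen : p.1.length < n := lt_of_lt_of_le (hlens p (by simp)) hwn
        obtain ⟨hsig_p, henc_p⟩ :=
          IH p.1.length hplen p.1 le_rfl o₁ p.2 hcp hperm_p hp2 hp3
        obtain ⟨ihflat, ihencs⟩ := ihM (o₁ + p.2.length) hch'
          (fun q hq => hlens q (by simp [hq]))
        constructor
        · simp only [List.map_cons, List.flatten_cons, List.map_append, ihflat, hsig_p]
        · intro sep
          simp only [List.map_cons, encs_cons, hsig_p, henc_p, List.length_map,
            ihencs sep, preJoin, List.flatten_cons]
          rfl
    match L, hlen with
    | p :: L', hlen =>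
      have hch0 := hchain
      obtain ⟨hperm_p, hp2, hp3, hcp, hch'⟩ := hch0
      have hplen : p.1.length < n := lt_of_lt_of_le (hblen p (by simp)) hwn
      obtain ⟨hsig_p, henc_p⟩ :=
        IH p.1.length hplen p.1 le_rfl (o+1) p.2 hcp hperm_p hp2 hp3
      obtain ⟨hflatL, _⟩ := aux (p :: L') (o+1) hchain hblen
      obtain ⟨_, hencsL'⟩ := aux L' (o+1+p.2.length) hch'
        (fun q hq => hblen q (by simp [hq]))
      rw [dec_eq hmin, hsplit]
      constructor
      · rw [signature_node]
        have hne : (((p :: L').map Prod.fst).map dec).isEmpty = false := by simp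
        rw [hne]
        simp only [Bool.false_eq_true, if_false]
        have hlength : (((p :: L').map Prod.fst).map dec).length = k + 1 := by
          simp only [List.length_map]
          exact hlen
        rw [hlength, hflatL, hflat]
        rfl
      · simp only [List.map_cons]
        rw [enc_cons, hsig_p, henc_p, List.length_map, hencsL' o]
        have : p.1 ++ preJoin o (L'.map Prod.fst) = joinSep o ((p :: L').map Prod.fst) := rfl
        rw [this, ← hsplit, joinSep_mySplit]

lemma isperm_iff (s w : List ℕ) : IsSPerm s w ↔ w.Perm (rep 1 s) := by
  have hgetD : ∀ (i : ℕ) (h : i < s.length), s.getD i 0 = s.get ⟨i, h⟩ := by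
    intro i h
    rw [List.getD_eq_getElem?_getD, List.getElem?_eq_getElem h]
    rfl
  constructor
  · rintro ⟨hmem, hcount⟩
    rw [List.perm_iff_count]
    intro x
    by_cases hx0 : x = 0
    · subst hx0
      rw [List.count_eq_zero.2 (fun h => by have := hmem 0 h; omega),
        count_rep_of_lt _ (by omega)]
    · by_cases hxl : x ≤ s.length
      · have hi : x - 1 < s.length := by omega
        have hx1 : x - 1 + 1 = x := by omega
        have := hcount ⟨x - 1, hi⟩
        simp only [List.get_eq_getElem] at this
        rw [← hx1, this, show x - 1 + 1 = 1 + (x - 1) by omega, count_rep, hgetD _ hi]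
        rfl
      · rw [List.count_eq_zero.2 (fun h => by have := hmem x h; omega),
          List.count_eq_zero.2 (fun h => by have := mem_rep h; omega)]
  · intro hp
    constructor
    · intro x hx
      have := mem_rep (hp.subset hx)
      exact ⟨this.1, by omega⟩
    · intro i
      rw [hp.count_eq, show (i : ℕ) + 1 = 1 + (i : ℕ) by omega, count_rep, hgetD _ i.2]

end SP

/-- For every composition `s` with all entries at least 2, the set of `s`-trees is in
bijection with the set of 312-avoiding Stirling `(s-𝟏)`-permutations. -/
theorem sTrees_equiv_stirling312 (s : List ℕ) (hs : ∀ x ∈ s, 2 ≤ x) :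
    Nonempty ({T : PTree // T.signature = s} ≃
      {w : List ℕ // IsSPerm (s.map (fun x => x - 1)) w ∧ Avoids212 w ∧ Avoids312 w}) := by
  open SP in
  set c := s.map (fun x => x - 1) with hc_def
  have hc1 : ∀ x ∈ c, 1 ≤ x := by
    intro x hx
    rw [hc_def, List.mem_map] at hx
    obtain ⟨y, hy, rfl⟩ := hx
    have := hs y hy
    omega
  have hcs : c.map (fun x => x + 1) = s := by
    rw [hc_def, List.map_map]
    have : s.map ((fun x => x + 1) ∘ (fun x => x - 1)) = s.map id :=
      List.map_congr_left (fun x hx => by have := hs x hx; simp; omega)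
    rw [this, List.map_id]
  have hF : ∀ T : {T : PTree // T.signature = s},
      IsSPerm c (SP.enc 1 T.1) ∧ Avoids212 (SP.enc 1 T.1) ∧ Avoids312 (SP.enc 1 T.1) := by
    rintro ⟨T, hT⟩
    obtain ⟨hp, hp2, hp3⟩ := SP.enc_good T 1
    rw [hT] at hp
    exact ⟨(SP.isperm_iff c _).2 hp, (SP.avoids212_iff _).2 hp2, (SP.avoids312_iff _).2 hp3⟩
  have hG : ∀ w : List ℕ, IsSPerm c w → Avoids212 w → Avoids312 w →
      PTree.signature (SP.dec w) = s ∧ SP.enc 1 (SP.dec w) = w := by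
    intro w h1 h2 h3
    obtain ⟨ha, hb⟩ := SP.dec_good w.length w le_rfl 1 c hc1 ((SP.isperm_iff c w).1 h1)
      ((SP.avoids212_iff w).1 h2) ((SP.avoids312_iff w).1 h3)
    exact ⟨ha.trans hcs, hb⟩
  refine ⟨⟨fun T => ⟨SP.enc 1 T.1, hF T⟩,
    fun w => ⟨SP.dec w.1, (hG w.1 w.2.1 w.2.2.1 w.2.2.2).1⟩, ?_, ?_⟩⟩
  · rintro ⟨T, hT⟩
    apply Subtype.ext
    exact SP.dec_enc T 1 (by rw [hT]; exact hs)
  · rintro ⟨w, hw⟩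
    apply Subtype.ext
    exact (hG w hw.1 hw.2.1 hw.2.2).2
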